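/- For every λ ∈ R − k, the subgroup S_λ = { a ∈ k^* : σ(λ) = aλ for some σ ∈ Aut_k(R) } has finite index in k^*. -/
import Mathlib


theorem scaling_subgroup_finite_index
    (k R : Type*) [Field k] [CommRing R] [IsDomain R] [IsNoetherianRing R]
    [Infinite R] [Algebra k R]
    (hinj : Function.Injective (algebraMap k R))
    (horb : ∃ s : Finset R, ∀ x : R, x ∉ Set.range (algebraMap k R) →
      ∃ y ∈ s, ∃ σ : R ≃ₐ[k] R, σ y = x)
    (lam : R) (hlam : lam ∉ Set.range (algebraMap k R)) :
    ∃ H : Subgroup kˣ,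
      (∀ a : kˣ, a ∈ H ↔ ∃ σ : R ≃ₐ[k] R, σ lam = algebraMap k R (a : k) * lam) ∧
      H.FiniteIndex := by
  classical
  set f := algebraMap k R with hf
  have hsc : ∀ (σ : R ≃ₐ[k] R) (c : k) (x : R), σ (f c * x) = f c * σ x := by
    intro σ c x
    rw [map_mul, AlgEquiv.commutes]
  let H : Subgroup kˣ :=
    { carrier := {a : kˣ | ∃ σ : R ≃ₐ[k] R, σ lam = f (a : k) * lam}
      one_mem' := ⟨AlgEquiv.refl, by simp⟩
      mul_mem' := by
        rintro a b ⟨σ, hσ⟩ ⟨τ, hτ⟩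
        refine ⟨τ.trans σ, ?_⟩
        show σ (τ lam) = f ((a : k) * (b : k)) * lam
        rw [hτ, hsc, hσ, map_mul]; ring
      inv_mem' := by
        rintro a ⟨σ, hσ⟩
        refine ⟨σ.symm, ?_⟩
        have h2 : lam = f (a : k) * σ.symm lam := by
          conv_lhs => rw [← σ.symm_apply_apply lam, hσ, hsc]
        show σ.symm lam = f ((a⁻¹ : kˣ) : k) * lam
        conv_rhs => rw [h2]
        rw [← mul_assoc, ← map_mul, Units.inv_mul, map_one, one_mul] }
  refine ⟨H, fun a => Iff.rfl, ?_⟩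
  obtain ⟨s, hs⟩ := horb
  have hnot : ∀ a : kˣ, f (a : k) * lam ∉ Set.range f := by
    rintro a ⟨c, hc⟩
    exact hlam ⟨((a⁻¹ : kˣ) : k) * c, by
      rw [map_mul, hc, ← mul_assoc, ← map_mul, Units.inv_mul, map_one, one_mul]⟩
  choose y hys σ hσ using fun a : kˣ => hs (f (a : k) * lam) (hnot a)
  have key : ∀ a b : kˣ, y a = y b → (QuotientGroup.mk a : kˣ ⧸ H) = QuotientGroup.mk b := by
    intro a b hab
    rw [QuotientGroup.eq]
    set ρ : R ≃ₐ[k] R := (σ a).symm.trans (σ b) with hρ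
    have hρab : ρ (f (a : k) * lam) = f (b : k) * lam := by
      show σ b ((σ a).symm (f (a : k) * lam)) = f (b : k) * lam
      rw [← hσ a, (σ a).symm_apply_apply, hab, hσ b]
    have hfa : f (a : k) ≠ 0 := by
      intro h
      exact a.ne_zero (hinj (by simpa using h))
    refine ⟨ρ, ?_⟩
    apply mul_left_cancel₀ hfa
    rw [← hsc, hρab, ← mul_assoc, ← map_mul]
    congr 1
    rw [← Units.val_mul, mul_inv_cancel_left]
  haveI hfin : Finite (kˣ ⧸ H) := by
    refine Finite.of_injective (fun q : kˣ ⧸ H => (⟨y q.out, hys q.out⟩ : {x // x ∈ s})) ?_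
    intro q q' h
    have := key q.out q'.out (congrArg Subtype.val h)
    rwa [QuotientGroup.out_eq', QuotientGroup.out_eq'] at this
  exact H.finiteIndex_of_finite_quotient
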